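/- Let f : ℝⁿ → ℝ be locally Lipschitz and upper-C¹ at every point of an open set Ω (i.e., −f is approximately convex on Ω). Then the standard model φ♯(y,x) = f(x) + f⁰(x,y−x) is strict on Ω: for every x₀ ∈ Ω and ε > 0 there exists δ > 0 such that f(y) ≤ φ♯(y,x) + ε‖y−x‖ for all x,y ∈ B(x₀,δ). -/

import Mathlib

open Metric Set Filter
open scoped Topology RealInnerProductSpace

/-- The Clarke directional derivative of `f` at `x` in direction `d`. -/
noncomputable def clarkeDeriv {E : Type*} [NormedAddCommGroup E] [NormedSpace ℝ E]
    (f : E → ℝ) (x d : E) : ℝ :=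
  Filter.limsup (fun p : E × ℝ => (f (p.1 + p.2 • d) - f p.1) / p.2)
    ((nhds x) ×ˢ (nhdsWithin 0 (Set.Ioi 0)))

theorem stmt_9 (n : ℕ) (f : EuclideanSpace ℝ (Fin n) → ℝ) (hf : LocallyLipschitz f)
    (Ω : Set (EuclideanSpace ℝ (Fin n))) (hΩ : IsOpen Ω)
    (hupperC1 : ∀ x ∈ Ω, ∀ ε > (0:ℝ), ∃ δ > (0:ℝ), ∀ y ∈ ball x δ, ∀ z ∈ ball x δ,
      ∀ t ∈ Icc (0:ℝ) 1,
        -(f (t • y + (1 - t) • z)) ≤ t * (-(f y)) + (1 - t) * (-(f z)) +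
          ε * (t * (1 - t)) * ‖y - z‖)
    (φ : EuclideanSpace ℝ (Fin n) → EuclideanSpace ℝ (Fin n) → ℝ)
    (hφ : ∀ y x, φ y x = f x + clarkeDeriv f x (y - x)) :
    ∀ x₀ ∈ Ω, ∀ ε > (0:ℝ), ∃ δ > (0:ℝ), ∀ x ∈ ball x₀ δ, ∀ y ∈ ball x₀ δ,
      f y ≤ φ y x + ε * ‖y - x‖ := by
  intro x₀ hx₀ ε hε
  obtain ⟨δ, hδ, hconv⟩ := hupperC1 x₀ hx₀ ε hε
  refine ⟨δ, hδ, fun x hx y hy => ?_⟩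
  rw [hφ]
  set d : EuclideanSpace ℝ (Fin n) := y - x with hd
  set L : Filter (EuclideanSpace ℝ (Fin n) × ℝ) := (𝓝 x) ×ˢ (𝓝[>] (0:ℝ)) with hL
  set u : EuclideanSpace ℝ (Fin n) × ℝ → ℝ :=
    fun p => (f (p.1 + p.2 • d) - f p.1) / p.2 with hu
  have hcd : clarkeDeriv f x d = limsup u L := rfl
  have hnn : (0:ℝ) ≤ ‖d‖ := norm_nonneg _
  -- bounded above
  obtain ⟨K, s, hs, hK⟩ := hf x
  have htend : Tendsto (fun p : EuclideanSpace ℝ (Fin n) × ℝ => p.1 + p.2 • d) L (𝓝 x) := by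
    have h1 : L ≤ 𝓝 (x, (0:ℝ)) := by
      rw [hL, nhds_prod_eq]
      exact Filter.prod_mono le_rfl nhdsWithin_le_nhds
    have h2 : Tendsto (fun p : EuclideanSpace ℝ (Fin n) × ℝ => p.1 + p.2 • d)
        (𝓝 (x, (0:ℝ))) (𝓝 x) := by
      have := (continuous_fst.add ((continuous_snd.smul continuous_const :
        Continuous fun p : EuclideanSpace ℝ (Fin n) × ℝ => p.2 • d))).tendsto (x, (0:ℝ))
      convert this using 2
      show x = x + (0:ℝ) • d
      simp
      case e'_3 => rfl
    exact h2.mono_left h1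
  have hfst : Tendsto (Prod.fst : EuclideanSpace ℝ (Fin n) × ℝ → _) L (𝓝 x) := tendsto_fst
  have hsnd : Tendsto (Prod.snd : EuclideanSpace ℝ (Fin n) × ℝ → ℝ) L (𝓝[>] 0) := tendsto_snd
  have hbdd : IsBoundedUnder (· ≤ ·) L u := by
    refine ⟨(K : ℝ) * ‖d‖, ?_⟩
    rw [eventually_map]
    have h1 : ∀ᶠ p : EuclideanSpace ℝ (Fin n) × ℝ in L, p.1 + p.2 • d ∈ s :=
      htend.eventually_mem hs
    have h2 : ∀ᶠ p : EuclideanSpace ℝ (Fin n) × ℝ in L, p.1 ∈ s :=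
      hfst.eventually_mem hs
    have h3 : ∀ᶠ p : EuclideanSpace ℝ (Fin n) × ℝ in L, (0:ℝ) < p.2 :=
      hsnd.eventually (eventually_mem_nhdsWithin.mono fun t ht => ht)
    filter_upwards [h1, h2, h3] with p hp1 hp2 hp3
    have hdist := hK.dist_le_mul _ hp1 _ hp2
    have : f (p.1 + p.2 • d) - f p.1 ≤ (K : ℝ) * (p.2 * ‖d‖) := by
      have h4 : dist (p.1 + p.2 • d) p.1 = p.2 * ‖d‖ := by
        rw [dist_eq_norm]
        simp [norm_smul, abs_of_pos hp3]
      calc f (p.1 + p.2 • d) - f p.1 ≤ dist (f (p.1 + p.2 • d)) (f p.1) := by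
            rw [Real.dist_eq]; exact le_abs_self _
        _ ≤ (K : ℝ) * dist (p.1 + p.2 • d) p.1 := hdist
        _ = (K : ℝ) * (p.2 * ‖d‖) := by rw [h4]
    rw [hu]
    rw [div_le_iff₀ hp3]
    calc f (p.1 + p.2 • d) - f p.1 ≤ (K : ℝ) * (p.2 * ‖d‖) := this
      _ = (K : ℝ) * ‖d‖ * p.2 := by ring
  -- frequently below
  have hT : Tendsto (fun t : ℝ => ((x : EuclideanSpace ℝ (Fin n)), t)) (𝓝[>] (0:ℝ)) L := by
    rw [hL]
    exact Tendsto.prodMk tendsto_const_nhds tendsto_id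
  have hev : ∀ᶠ t in 𝓝[>] (0:ℝ), f y - f x - ε * ‖d‖ ≤ u (x, t) := by
    filter_upwards [Ioc_mem_nhdsGT_of_mem (by norm_num : (0:ℝ) ∈ Ico (0:ℝ) 1)] with t ht
    obtain ⟨ht0, ht1⟩ := ht
    have hcv := hconv y hy x hx t ⟨le_of_lt ht0, ht1⟩
    have hxd : x + t • d = t • y + (1 - t) • x := by rw [hd]; module
    rw [hu]
    simp only
    rw [le_div_iff₀ ht0, hxd]
    have hnd : ‖d‖ = ‖y - x‖ := by rw [hd]
    nlinarith [hcv, norm_nonneg (y - x), hnd,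
      mul_nonneg (mul_nonneg hε.le (mul_pos ht0 ht0).le) (norm_nonneg (y - x))]
  have hfreq : ∃ᶠ p in L, f y - f x - ε * ‖d‖ ≤ u p := by
    haveI : (𝓝[>] (0:ℝ)).NeBot := nhdsGT_neBot 0
    have hfr : ∃ᶠ p in Filter.map (fun t : ℝ => ((x : EuclideanSpace ℝ (Fin n)), t))
        (𝓝[>] (0:ℝ)), f y - f x - ε * ‖d‖ ≤ u p :=
      Filter.frequently_map.2 hev.frequently
    exact hfr.filter_mono hT
  have hle := Filter.le_limsup_of_frequently_le hfreq hbdd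
  rw [hcd] at *
  linarith [hle]
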